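/- Let D be a real M×M skew-symmetric matrix, Y⁰ ∈ ℝ^M, r = 2, γ ∈ (0,1). Define Ỹ₂(t) = Y⁰ + t D Y⁰ + (t²/2) D² Y⁰ + (t³/(2(2+γ))) D³ Y⁰. If τ‖D‖ ≤ √(2(4-γ²)/3), then ‖Ỹ₂(t)‖ ≤ ‖Y⁰‖ for all t ∈ [0, τ]. -/

import Mathlib

open Matrix

/-- View a plain vector in `Fin M → ℝ` as an element of Euclidean space. -/
noncomputable def vecE {M : ℕ} (v : Fin M → ℝ) : EuclideanSpace ℝ (Fin M) :=
  (WithLp.equiv 2 (Fin M → ℝ)).symm v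


private lemma aux_sq_le (t a c : ℝ) (ht : 0 ≤ t) (ha : 0 ≤ a) (hc : 0 ≤ c)
    (h : t * a ≤ Real.sqrt c) : (t * a) ^ 2 ≤ c := by
  have := pow_le_pow_left₀ (mul_nonneg ht ha) h 2
  rwa [Real.sq_sqrt hc] at this

private lemma aux_scalar (t γ a n2 n3 : ℝ) (hγ0 : 0 < γ) (hγ1 : γ < 1) (ht0 : 0 ≤ t)
    (ha : 0 ≤ a) (ht2 : (t * a) ^ 2 ≤ 2 * (4 - γ ^ 2) / 3) (hn2 : 0 ≤ n2) (hn3 : 0 ≤ n3)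
    (h32 : n3 ≤ a ^ 2 * n2) :
    ((t ^ 2 / 2) ^ 2 - 2 * t * (t ^ 3 / (2 * (2 + γ)))) * n2
      + (t ^ 3 / (2 * (2 + γ))) ^ 2 * n3 ≤ 0 := by
  have h2γ : (0 : ℝ) < 2 + γ := by linarith
  have h1 : (t ^ 3 / (2 * (2 + γ))) ^ 2 * (a ^ 2 * n2)
      = (t ^ 4 / (4 * (2 + γ) ^ 2) * (t * a) ^ 2) * n2 := by
    field_simp; ring
  have h2 : t ^ 4 / (4 * (2 + γ) ^ 2) * (t * a) ^ 2
      ≤ t ^ 4 / (4 * (2 + γ) ^ 2) * (2 * (4 - γ ^ 2) / 3) :=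
    mul_le_mul_of_nonneg_left ht2 (by positivity)
  have h3 : (t ^ 2 / 2) ^ 2 - 2 * t * (t ^ 3 / (2 * (2 + γ)))
      + t ^ 4 / (4 * (2 + γ) ^ 2) * (2 * (4 - γ ^ 2) / 3)
      = -(t ^ 4 * (2 - γ) / (12 * (2 + γ))) := by
    field_simp; ring
  have h4 : (0 : ℝ) ≤ t ^ 4 * (2 - γ) / (12 * (2 + γ)) :=
    div_nonneg (mul_nonneg (by positivity) (by linarith)) (by linarith)
  have h5 : (t ^ 3 / (2 * (2 + γ))) ^ 2 * n3 ≤ (t ^ 3 / (2 * (2 + γ))) ^ 2 * (a ^ 2 * n2) :=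
    mul_le_mul_of_nonneg_left h32 (sq_nonneg _)
  nlinarith [mul_le_mul_of_nonneg_right h2 hn2,
    mul_le_mul_of_nonneg_right (le_of_eq h3) hn2]

private lemma aux_norm_le (a b : ℝ) (ha : 0 ≤ a) (hb : 0 ≤ b) (h : a ^ 2 ≤ b ^ 2) :
    a ≤ b := by nlinarith

theorem strong_stability_r_two {M : ℕ} (D : Matrix (Fin M) (Fin M) ℝ)
    (hD : D + D.transpose = 0) (Y0 : EuclideanSpace ℝ (Fin M)) (γ : ℝ)
    (hγ : γ ∈ Set.Ioo (0 : ℝ) 1) (τ : ℝ) (hτ : 0 ≤ τ)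
    (hCFL : τ * ‖Matrix.toEuclideanCLM (𝕜 := ℝ) D‖ ≤ Real.sqrt (2 * (4 - γ ^ 2) / 3)) :
    ∀ t ∈ Set.Icc (0 : ℝ) τ,
      ‖Y0 + t • vecE (D.mulVec Y0) + (t ^ 2 / 2) • vecE ((D ^ 2).mulVec Y0)
          + (t ^ 3 / (2 * (2 + γ))) • vecE ((D ^ 3).mulVec Y0)‖ ≤ ‖Y0‖ := by
  intro t ht
  obtain ⟨ht0, htτ⟩ := ht
  obtain ⟨hγ0, hγ1⟩ := hγ
  set A := Matrix.toEuclideanCLM (𝕜 := ℝ) D with hAdef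
  -- A is skew-adjoint
  have hadj : ContinuousLinearMap.adjoint A = -A := by
    have h1 : star D = -D := by
      have ht' : D.transpose = -D := by
        rw [add_comm] at hD; exact (add_eq_zero_iff_eq_neg).mp hD
      rw [Matrix.star_eq_conjTranspose, Matrix.conjTranspose_eq_transpose_of_trivial, ht']
    rw [hAdef, ← ContinuousLinearMap.star_eq_adjoint, ← map_star, h1, map_neg]
  have hskew : ∀ x y : EuclideanSpace ℝ (Fin M),
      (inner ℝ (A x) y : ℝ) = -(inner ℝ x (A y) : ℝ) := by
    intro x y
    have := ContinuousLinearMap.adjoint_inner_right (𝕜 := ℝ) A x y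
    rw [hadj] at this
    simpa using this.symm
  have hz : ∀ x : EuclideanSpace ℝ (Fin M), (inner ℝ x (A x) : ℝ) = 0 := by
    intro x
    have h1 := hskew x x
    have h2 := real_inner_comm x (A x)
    linarith
  set v1 : EuclideanSpace ℝ (Fin M) := A Y0 with hv1
  set v2 : EuclideanSpace ℝ (Fin M) := A v1 with hv2
  set v3 : EuclideanSpace ℝ (Fin M) := A v2 with hv3
  have e1 : vecE (D.mulVec Y0) = v1 := rfl
  have e2 : vecE ((D ^ 2).mulVec Y0) = v2 := by
    show Matrix.toEuclideanCLM (𝕜 := ℝ) (D ^ 2) Y0 = v2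
    rw [map_pow]
    simp [hv2, hv1, pow_succ, ContinuousLinearMap.mul_apply]
    rfl
  have e3 : vecE ((D ^ 3).mulVec Y0) = v3 := by
    show Matrix.toEuclideanCLM (𝕜 := ℝ) (D ^ 3) Y0 = v3
    rw [map_pow]
    simp [hv3, hv2, hv1, pow_succ, ContinuousLinearMap.mul_apply]
    rfl
  rw [e1, e2, e3]
  set c1 : ℝ := t with hc1
  set c2 : ℝ := t ^ 2 / 2 with hc2
  set c3 : ℝ := t ^ 3 / (2 * (2 + γ)) with hc3
  -- inner product table
  have h01 : (inner ℝ Y0 v1 : ℝ) = 0 := hz Y0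
  have h10 : (inner ℝ v1 Y0 : ℝ) = 0 := by rw [real_inner_comm]; exact h01
  have h02 : (inner ℝ Y0 v2 : ℝ) = -‖v1‖ ^ 2 := by
    have h := hskew Y0 v1
    rw [← hv1, ← hv2, real_inner_self_eq_norm_sq] at h
    linarith
  have h20 : (inner ℝ v2 Y0 : ℝ) = -‖v1‖ ^ 2 := by rw [real_inner_comm]; exact h02
  have h12 : (inner ℝ v1 v2 : ℝ) = 0 := hz v1
  have h21 : (inner ℝ v2 v1 : ℝ) = 0 := by rw [real_inner_comm]; exact h12
  have h03 : (inner ℝ Y0 v3 : ℝ) = 0 := by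
    have h := hskew Y0 v2
    have h12' := hz v1
    rw [← hv2] at h12'
    rw [← hv1, ← hv3] at h
    linarith
  have h30 : (inner ℝ v3 Y0 : ℝ) = 0 := by rw [real_inner_comm]; exact h03
  have h13 : (inner ℝ v1 v3 : ℝ) = -‖v2‖ ^ 2 := by
    have h := hskew v1 v2
    rw [← hv2, ← hv3, real_inner_self_eq_norm_sq] at h
    linarith
  have h31 : (inner ℝ v3 v1 : ℝ) = -‖v2‖ ^ 2 := by rw [real_inner_comm]; exact h13
  have h23 : (inner ℝ v2 v3 : ℝ) = 0 := hz v2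
  have h32 : (inner ℝ v3 v2 : ℝ) = 0 := by rw [real_inner_comm]; exact h23
  have key : ‖Y0 + c1 • v1 + c2 • v2 + c3 • v3‖ ^ 2 =
      ‖Y0‖ ^ 2 + (c1 ^ 2 - 2 * c2) * ‖v1‖ ^ 2 + (c2 ^ 2 - 2 * c1 * c3) * ‖v2‖ ^ 2
        + c3 ^ 2 * ‖v3‖ ^ 2 := by
    rw [← real_inner_self_eq_norm_sq]
    simp only [inner_add_left, inner_add_right, real_inner_smul_left, real_inner_smul_right,
      h01, h10, h02, h20, h03, h30, h12, h21, h13, h31, h23, h32]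
    simp only [real_inner_self_eq_norm_sq]
    ring
  have hn3 : ‖v3‖ ^ 2 ≤ ‖A‖ ^ 2 * ‖v2‖ ^ 2 := by
    have h := A.le_opNorm v2
    have := pow_le_pow_left₀ (norm_nonneg v3) h 2
    rwa [mul_pow] at this
  clear_value v3 v2 v1 A
  clear e1 e2 e3 hv1 hv2 hv3 hAdef hadj hskew hz h01 h10 h02 h20 h12 h21 h03 h30 h13 h31 h23 h32
  have hAn : (0 : ℝ) ≤ ‖A‖ := norm_nonneg _
  have htA : t * ‖A‖ ≤ Real.sqrt (2 * (4 - γ ^ 2) / 3) :=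
    le_trans (mul_le_mul_of_nonneg_right htτ hAn) hCFL
  have hrad : (0 : ℝ) ≤ 2 * (4 - γ ^ 2) / 3 := by
    have h1 : γ ^ 2 ≤ 1 := pow_le_one₀ (le_of_lt hγ0) (le_of_lt hγ1)
    linarith
  have ht2 : (t * ‖A‖) ^ 2 ≤ 2 * (4 - γ ^ 2) / 3 := aux_sq_le t ‖A‖ _ ht0 hAn hrad htA
  have hmain := aux_scalar t γ ‖A‖ (‖v2‖ ^ 2) (‖v3‖ ^ 2) hγ0 hγ1 ht0 hAn ht2
    (sq_nonneg _) (sq_nonneg _) hn3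
  have hmain' : (c2 ^ 2 - 2 * c1 * c3) * ‖v2‖ ^ 2 + c3 ^ 2 * ‖v3‖ ^ 2 ≤ 0 := by
    rw [hc1, hc2, hc3]; exact hmain
  have hc12 : c1 ^ 2 - 2 * c2 = 0 := by rw [hc1, hc2]; ring
  have hfin : ‖Y0 + c1 • v1 + c2 • v2 + c3 • v3‖ ^ 2 ≤ ‖Y0‖ ^ 2 := by
    rw [key, hc12]
    linarith [hmain']
  exact aux_norm_le _ _ (norm_nonneg _) (norm_nonneg _) hfin
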